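/- Jackson-integral representation of F_{N,M}: let q, x_1,…,x_M, a_1,…,a_M, b_1,…,b_N, w_1,…,w_N be complex numbers with |q| < 1, |x_i| < 1, |w_j| < 1 for all i,j (here w_j plays the role of q^{γ_j}). Assume (b_j w_j;q)_n ≠ 0 and (a_i x_i;q)_n ≠ 0 for all i, j and all n ∈ ℕ, that (x_i q^k;q)_∞ ≠ 0 for all i and all k ∈ ℕ, that (b_j q^k;q)_∞ ≠ 0 and (w_j;q)_∞ ≠ 0 for all j and k ∈ ℕ, and that the family (m,n) ∈ ℕ^M × ℕ^N ↦ ∏_{i=1}^M ((a_i;q)_{m_i}/(q;q)_{m_i}) x_i^{m_i} · ∏_{j=1}^N ((b_j;q)_{n_j}/(q;q)_{n_j}) w_j^{n_j} · q^{|m||n|} is absolutely summable. Then F_{N,M}({w_j},{a_i};{b_j w_j};{x_i}) = ∏_{j=1}^N [ (w_j;q)_∞ (b_j;q)_∞ / ((b_j w_j;q)_∞ (q;q)_∞) ] · ∑_{n ∈ ℕ^N} ∏_{i=1}^M ( (a_i x_i q^{|n|};q)_∞ / (x_i q^{|n|};q)_∞ ) · ∏_{j=1}^N ( (q^{n_j+1};q)_∞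 / (b_j q^{n_j};q)_∞ ) · ∏_{j=1}^N w_j^{n_j}, the latter sum being the multiple Jackson integral ∏_{j=1}^N ∫_0^1 d_q t_j of ∏_{i=1}^M ((a_i x_i t_1⋯t_N;q)_∞/(x_i t_1⋯t_N;q)_∞) ∏_{j=1}^N ((q t_j;q)_∞/(b_j t_j;q)_∞) t_j^{γ_j−1}/(1−q). -/

import Mathlib

open scoped BigOperators
open Filter Complex

noncomputable def qPoch (q a : ℂ) (n : ℕ) : ℂ :=
  ∏ k ∈ Finset.range n, (1 - q ^ k * a)

noncomputable def qPochInf (q a : ℂ) : ℂ :=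
  ∏' k : ℕ, (1 - q ^ k * a)

/-- The generalized `q`-hypergeometric series `F_{N,M}` with upper parameters `a`,
`b`-type parameters `b`, lower parameters `c` and variables `y`. -/
noncomputable def qHyperF (q : ℂ) {N M : ℕ} (a : Fin N → ℂ) (b : Fin M → ℂ)
    (c : Fin N → ℂ) (y : Fin M → ℂ) : ℂ :=
  ∑' m : Fin M → ℕ,
    (∏ j, qPoch q (a j) (∑ i, m i) / qPoch q (c j) (∑ i, m i)) *
      (∏ i, qPoch q (b i) (m i) / qPoch q q (m i)) * ∏ i, y i ^ m i

section Lemmas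

lemma qPoch_succ (q c : ℂ) (n : ℕ) : qPoch q c (n + 1) = qPoch q c n * (1 - q ^ n * c) := by
  rw [qPoch, qPoch, Finset.prod_range_succ]

lemma tprod_eq_zero_of_factor {f : ℕ → ℂ} {b : ℕ} (h : f b = 0) : ∏' k, f k = 0 := by
  have hp : HasProd f 0 := by
    rw [HasProd]
    apply tendsto_const_nhds.congr'
    filter_upwards [Filter.eventually_ge_atTop ({b} : Finset ℕ)] with s hs
    exact (Finset.prod_eq_zero (hs (Finset.mem_singleton_self b)) h).symm
  exact hp.tprod_eq

lemma factor_ne_zero {q c : ℂ} (h : qPochInf q c ≠ 0) (k : ℕ) : 1 - q ^ k * c ≠ 0 :=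
  fun h0 => h (tprod_eq_zero_of_factor h0)

lemma factor_ne_zero_of_qPoch {q c : ℂ} (h : ∀ n, qPoch q c n ≠ 0) (k : ℕ) :
    1 - q ^ k * c ≠ 0 := by
  intro h0
  exact h (k+1) (Finset.prod_eq_zero (Finset.self_mem_range_succ k) h0)

lemma summable_log {q : ℂ} (hq : ‖q‖ < 1) (c : ℂ) :
    Summable (fun k : ℕ => Complex.log (1 - q ^ k * c)) := by
  have h0 : Filter.Tendsto (fun k : ℕ => ‖q‖ ^ k * ‖c‖) atTop (nhds 0) := by
    simpa using (tendsto_pow_atTop_nhds_zero_of_lt_one (norm_nonneg q) hq).mul_const ‖c‖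
  obtain ⟨K, hK⟩ := (Filter.eventually_atTop).1 (h0.eventually_le_const (by norm_num : (0:ℝ) < 1/2))
  rw [← summable_nat_add_iff K]
  apply Summable.of_norm_bounded (g := fun k : ℕ => (3/2) * (‖q‖ ^ (k + K) * ‖c‖))
  · apply Summable.mul_left
    apply Summable.mul_right
    exact (summable_geometric_of_lt_one (norm_nonneg q) hq).comp_injective
      (add_left_injective K)
  · intro k
    have hb : ‖-(q ^ (k + K) * c)‖ ≤ 1/2 := by
      rw [norm_neg, norm_mul, norm_pow]
      exact hK (k + K) (Nat.le_add_left K k)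
    have := Complex.norm_log_one_add_half_le_self hb
    simp only [norm_neg, norm_mul, norm_pow] at this ⊢
    calc ‖Complex.log (1 - q ^ (k + K) * c)‖
        = ‖Complex.log (1 + -(q ^ (k+K) * c))‖ := by ring_nf
      _ ≤ 3/2 * (‖q‖^(k+K) * ‖c‖) := by
          simpa [norm_neg, norm_mul, norm_pow] using this

lemma multipliable_poch {q : ℂ} (hq : ‖q‖ < 1) {c : ℂ} (hc : ∀ k : ℕ, 1 - q ^ k * c ≠ 0) :
    Multipliable (fun k : ℕ => 1 - q ^ k * c) :=
  Complex.multipliable_of_summable_log (summable_log hq c)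

lemma qPochInf_ne_zero {q : ℂ} (hq : ‖q‖ < 1) {c : ℂ} (hc : ∀ k : ℕ, 1 - q ^ k * c ≠ 0) :
    qPochInf q c ≠ 0 := by
  have := Complex.cexp_tsum_eq_tprod (f := fun k : ℕ => 1 - q ^ k * c) hc (summable_log hq c)
  rw [qPochInf, ← this]
  exact Complex.exp_ne_zero _

lemma qPochInf_split {q : ℂ} (hq : ‖q‖ < 1) {c : ℂ} (hc : ∀ k : ℕ, 1 - q ^ k * c ≠ 0)
    (n : ℕ) : qPochInf q c = qPoch q c n * qPochInf q (q ^ n * c) := by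
  have hc' : ∀ k : ℕ, 1 - q ^ k * (q ^ n * c) ≠ 0 := by
    intro k
    have := hc (k + n)
    rwa [pow_add, mul_assoc] at this
  have hm : Multipliable (fun k : ℕ => 1 - q ^ (k + n) * c) :=
    (multipliable_poch hq hc').congr (fun k => by rw [pow_add]; ring)
  have h := (Multipliable.prod_mul_tprod_nat_mul' (f := fun k : ℕ => 1 - q ^ k * c) (k := n) hm).symm
  have h2 : (∏' (k : ℕ), (1 - q ^ (k + n) * c)) = ∏' k : ℕ, (1 - q ^ k * (q ^ n * c)) :=
    tprod_congr (fun k => by rw [pow_add]; ring)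
  rw [qPochInf, h, h2, qPoch, qPochInf]

lemma norm_qPoch_le {q : ℂ} (hq : ‖q‖ < 1) (c : ℂ) (n : ℕ) :
    ‖qPoch q c n‖ ≤ Real.exp (‖c‖ * (1 - ‖q‖)⁻¹) := by
  have h1 : ‖qPoch q c n‖ ≤ ∏ k ∈ Finset.range n, Real.exp (‖q‖ ^ k * ‖c‖) := by
    rw [qPoch, norm_prod]
    apply Finset.prod_le_prod (fun k _ => norm_nonneg _)
    intro k _
    calc ‖1 - q ^ k * c‖ ≤ ‖(1:ℂ)‖ + ‖q ^ k * c‖ := norm_sub_le _ _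
      _ = 1 + ‖q‖ ^ k * ‖c‖ := by simp [norm_mul, norm_pow]
      _ ≤ Real.exp (‖q‖ ^ k * ‖c‖) := by
          have := Real.add_one_le_exp (‖q‖ ^ k * ‖c‖); linarith
  rw [← Real.exp_sum] at h1
  apply h1.trans
  apply Real.exp_le_exp.2
  have hs : Summable (fun k : ℕ => ‖q‖ ^ k * ‖c‖) :=
    (summable_geometric_of_lt_one (norm_nonneg q) hq).mul_right _
  calc ∑ k ∈ Finset.range n, ‖q‖ ^ k * ‖c‖ ≤ ∑' k : ℕ, ‖q‖ ^ k * ‖c‖ :=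
        Summable.sum_le_tsum _ (fun k _ => by positivity) hs
    _ = (1 - ‖q‖)⁻¹ * ‖c‖ := by
        rw [tsum_mul_right, tsum_geometric_of_lt_one (norm_nonneg q) hq, mul_comm]
    _ = ‖c‖ * (1 - ‖q‖)⁻¹ := by ring

lemma norm_qPochInf_le {q : ℂ} (hq : ‖q‖ < 1) {c : ℂ} (hc : ∀ k : ℕ, 1 - q ^ k * c ≠ 0) :
    ‖qPochInf q c‖ ≤ Real.exp (‖c‖ * (1 - ‖q‖)⁻¹) := by
  have ht := (multipliable_poch hq hc).hasProd.tendsto_prod_nat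
  have ht2 : Filter.Tendsto (fun n => ‖∏ k ∈ Finset.range n, (1 - q ^ k * c)‖)
      atTop (nhds ‖qPochInf q c‖) := ht.norm
  exact le_of_tendsto' ht2 (fun n => norm_qPoch_le hq c n)

lemma one_sub_ne_zero_of_norm_lt {u : ℂ} (h : ‖u‖ < 1) : 1 - u ≠ 0 := by
  intro h0
  have : u = 1 := by linear_combination -h0
  rw [this] at h; norm_num at h

lemma qfactor_ne_zero {q : ℂ} (hq : ‖q‖ < 1) (k : ℕ) : 1 - q ^ k * q ≠ 0 := by
  apply one_sub_ne_zero_of_norm_lt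
  rw [norm_mul, norm_pow]
  calc ‖q‖ ^ k * ‖q‖ ≤ 1 ^ k * ‖q‖ := by
        apply mul_le_mul_of_nonneg_right _ (norm_nonneg q)
        exact pow_le_pow_left₀ (norm_nonneg q) hq.le k
    _ < 1 := by simpa using hq

lemma qPoch_q_ne_zero {q : ℂ} (hq : ‖q‖ < 1) (n : ℕ) : qPoch q q n ≠ 0 :=
  Finset.prod_ne_zero_iff.2 fun k _ => qfactor_ne_zero hq k

/-- uniform bound on coefficients of the q-binomial series -/
noncomputable def qC (q a : ℂ) : ℝ :=
  Real.exp (‖a‖ * (1 - ‖q‖)⁻¹) * Real.exp ((1 - ‖q‖)⁻¹) / ‖qPochInf q q‖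

lemma qC_nonneg (q a : ℂ) : 0 ≤ qC q a := by
  apply div_nonneg _ (norm_nonneg _)
  positivity

lemma coeff_norm_le {q : ℂ} (hq : ‖q‖ < 1) (a : ℂ) (m : ℕ) :
    ‖qPoch q a m / qPoch q q m‖ ≤ qC q a := by
  have hq0 : (0:ℝ) < 1 - ‖q‖ := by linarith
  have hQ := qPochInf_ne_zero hq (qfactor_ne_zero hq)
  have hsplit := qPochInf_split hq (qfactor_ne_zero hq) m
  have hPm := qPoch_q_ne_zero hq m
  have hinv : (qPoch q q m)⁻¹ = qPochInf q (q ^ m * q) / qPochInf q q := by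
    rw [eq_div_iff hQ, hsplit]
    field_simp
  rw [div_eq_mul_inv, hinv, norm_mul, norm_div, qC]
  rw [div_eq_mul_inv, div_eq_mul_inv, ← mul_assoc]
  apply mul_le_mul _ le_rfl (by positivity) (by positivity)
  apply mul_le_mul (norm_qPoch_le hq a m) _ (norm_nonneg _) (by positivity)
  calc ‖qPochInf q (q ^ m * q)‖ ≤ Real.exp (‖q ^ m * q‖ * (1 - ‖q‖)⁻¹) := by
        apply norm_qPochInf_le hq
        intro k
        have := qfactor_ne_zero hq (k + m)
        rwa [pow_add, show q ^ k * q ^ m * q = q ^ k * (q ^ m * q) by ring] at this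
    _ ≤ Real.exp ((1 - ‖q‖)⁻¹) := by
        apply Real.exp_le_exp.2
        have h1 : ‖q ^ m * q‖ ≤ 1 := by
          rw [norm_mul, norm_pow]
          have h2 : ‖q‖ ^ m ≤ 1 := pow_le_one₀ (norm_nonneg q) hq.le
          nlinarith [norm_nonneg q]
        simpa using mul_le_mul_of_nonneg_right h1 (inv_nonneg.2 hq0.le)

lemma summable_coeff {q : ℂ} (hq : ‖q‖ < 1) (a : ℂ) {z : ℂ} (hz : ‖z‖ < 1) :
    Summable (fun m : ℕ => ‖qPoch q a m / qPoch q q m * z ^ m‖) := by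
  refine Summable.of_nonneg_of_le (fun m => norm_nonneg _) (fun m => ?_)
    ((summable_geometric_of_lt_one (norm_nonneg z) hz).mul_left (qC q a))
  rw [norm_mul, norm_pow]
  exact mul_le_mul_of_nonneg_right (coeff_norm_le hq a m) (by positivity)

lemma pi_tsum_prod : ∀ (N : ℕ) (f : Fin N → ℕ → ℂ), (∀ j, Summable (fun n => ‖f j n‖)) →
    (Summable fun n : Fin N → ℕ => ‖∏ j, f j (n j)‖) ∧
    ((∏ j, ∑' n : ℕ, f j n) = ∑' n : Fin N → ℕ, ∏ j, f j (n j)) := by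
  intro N
  induction N with
  | zero =>
    intro f _
    constructor
    · exact Summable.of_finite
    · simp [tsum_eq_single (fun (i : Fin 0) => (0:ℕ)) (fun g hg => absurd (funext fun i => i.elim0) (Ne.symm hg ∘ Eq.symm))]
  | succ N IH =>
    intro f hf
    obtain ⟨IHs, IHe⟩ := IH (fun j => f j.succ) (fun j => hf j.succ)
    have key : ∀ p : ℕ × (Fin N → ℕ),
        (∏ j, f j (Fin.consEquiv (fun _ => ℕ) p j)) = f 0 p.1 * ∏ j : Fin N, f j.succ (p.2 j) := by
      intro p
      rw [Fin.prod_univ_succ]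
      simp [Fin.consEquiv]
    constructor
    · have hs : Summable fun p : ℕ × (Fin N → ℕ) =>
          ‖∏ j, f j (Fin.consEquiv (fun _ => ℕ) p j)‖ :=
        ((hf 0).mul_norm IHs).congr (fun p => by rw [key p])
      exact (Fin.consEquiv (fun _ => ℕ)).summable_iff.1 hs
    · rw [Fin.prod_univ_succ]
      calc (∑' n, f 0 n) * ∏ j : Fin N, ∑' n, f j.succ n
          = (∑' n, f 0 n) * ∑' g : Fin N → ℕ, ∏ j : Fin N, f j.succ (g j) := by rw [IHe]
        _ = ∑' p : ℕ × (Fin N → ℕ), f 0 p.1 * ∏ j : Fin N, f j.succ (p.2 j) :=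
            tsum_mul_tsum_of_summable_norm (hf 0) IHs
        _ = ∑' p : ℕ × (Fin N → ℕ), ∏ j, f j (Fin.consEquiv (fun _ => ℕ) p j) :=
            tsum_congr fun p => (key p).symm
        _ = ∑' n : Fin (N+1) → ℕ, ∏ j, f j (n j) :=
            (Fin.consEquiv (fun _ => ℕ)).tsum_eq (fun n : Fin (N+1) → ℕ => ∏ j, f j (n j))

theorem q_binomial {q a z : ℂ} (hq : ‖q‖ < 1) (hz : ‖z‖ < 1)
    (hzf : ∀ k : ℕ, 1 - q ^ k * z ≠ 0) (haz : ∀ k : ℕ, 1 - q ^ k * (a * z) ≠ 0) :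
    ∑' m : ℕ, qPoch q a m / qPoch q q m * z ^ m = qPochInf q (a * z) / qPochInf q z := by
  set c : ℕ → ℂ := fun m => qPoch q a m / qPoch q q m with hc
  set F : ℂ → ℂ := fun u => ∑' m : ℕ, c m * u ^ m with hF
  have hSu : ∀ u : ℂ, ‖u‖ < 1 → Summable (fun m : ℕ => c m * u ^ m) :=
    fun u hu => (summable_coeff hq a hu).of_norm
  have hrec : ∀ m : ℕ, (1 - q ^ m * q) * c (m + 1) = (1 - q ^ m * a) * c m := by
    intro m
    have e1 := qPoch_succ q a m
    have e2 := qPoch_succ q q m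
    have h1 := qPoch_q_ne_zero hq m
    have h2 := qPoch_q_ne_zero hq (m + 1)
    have h3 := qfactor_ne_zero hq m
    rw [hc]
    simp only [e1, e2]
    field_simp
  have feq : ∀ u : ℂ, ‖u‖ < 1 → (1 - u) * F u = (1 - a * u) * F (q * u) := by
    intro u hu
    have hqu : ‖q * u‖ < 1 := by
      rw [norm_mul]
      nlinarith [norm_nonneg q, norm_nonneg u]
    have S1 := hSu u hu
    have S2 := hSu (q * u) hqu
    set g : ℕ → ℂ := fun m => c m * u ^ m - c m * (q * u) ^ m with hg
    set h : ℕ → ℂ := fun m => c m * u ^ m * u - a * (c m * (q * u) ^ m) * u with hh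
    have hg0 : g 0 = 0 := by simp [hg]
    have hgh : ∀ m, g (m + 1) = h m := by
      intro m
      simp only [hg, hh]
      linear_combination (u ^ (m+1)) * (hrec m)
    have Sg : Summable g := S1.sub S2
    have hsum_eq : ∑' m, g m = ∑' m, h m := by
      rw [Summable.tsum_eq_zero_add Sg, hg0, zero_add]
      exact tsum_congr hgh
    have e1 : ∑' m, g m = F u - F (q * u) := Summable.tsum_sub S1 S2
    have e2 : ∑' m, h m = F u * u - a * F (q * u) * u := by
      rw [hh]
      rw [Summable.tsum_sub ((S1.mul_right u)) ((S2.mul_left a).mul_right u)]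
      rw [tsum_mul_right, tsum_mul_right, tsum_mul_left]
    rw [e1, e2] at hsum_eq
    linear_combination hsum_eq
  have iter : ∀ n : ℕ, qPoch q z n * F z = qPoch q (a * z) n * F (q ^ n * z) := by
    intro n
    induction n with
    | zero => simp [qPoch]
    | succ n IH =>
      have hun : ‖q ^ n * z‖ < 1 := by
        rw [norm_mul, norm_pow]
        have : ‖q‖ ^ n ≤ 1 := pow_le_one₀ (norm_nonneg q) hq.le
        nlinarith [norm_nonneg z, pow_nonneg (norm_nonneg q) n]
      have harg : q * (q ^ n * z) = q ^ (n + 1) * z := by ring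
      have haarg : 1 - a * (q ^ n * z) = 1 - q ^ n * (a * z) := by ring
      calc qPoch q z (n + 1) * F z
          = (1 - q ^ n * z) * (qPoch q z n * F z) := by rw [qPoch_succ]; ring
        _ = (1 - q ^ n * z) * (qPoch q (a * z) n * F (q ^ n * z)) := by rw [IH]
        _ = qPoch q (a * z) n * ((1 - q ^ n * z) * F (q ^ n * z)) := by ring
        _ = qPoch q (a * z) n * ((1 - a * (q ^ n * z)) * F (q * (q ^ n * z))) := by
            rw [feq _ hun]
        _ = qPoch q (a * z) (n + 1) * F (q ^ (n + 1) * z) := by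
            rw [harg, haarg, qPoch_succ]; ring
  have lim1 : Tendsto (fun n => qPoch q z n) atTop (nhds (qPochInf q z)) :=
    (multipliable_poch hq hzf).hasProd.tendsto_prod_nat
  have lim2 : Tendsto (fun n => qPoch q (a * z) n) atTop (nhds (qPochInf q (a * z))) :=
    (multipliable_poch hq haz).hasProd.tendsto_prod_nat
  have bound : ∀ u : ℂ, ‖u‖ ≤ ‖z‖ → ‖F u - 1‖ ≤ qC q a * (1 - ‖z‖)⁻¹ * ‖u‖ := by
    intro u hu
    have hu1 : ‖u‖ < 1 := lt_of_le_of_lt hu hz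
    have hSn : Summable (fun m : ℕ => ‖c (m + 1) * u ^ (m + 1)‖) := by
      have := summable_coeff hq a hu1
      rw [← summable_nat_add_iff 1] at this
      exact this
    have hc0 : c 0 = 1 := by simp [hc, qPoch]
    have hF1 : F u - 1 = ∑' m : ℕ, c (m + 1) * u ^ (m + 1) := by
      show (∑' m : ℕ, c m * u ^ m) - 1 = _
      rw [Summable.tsum_eq_zero_add (hSu u hu1)]
      simp [hc0]
    rw [hF1]
    have hb : Summable (fun m : ℕ => qC q a * ‖z‖ ^ m * ‖u‖) :=
      (((summable_geometric_of_lt_one (norm_nonneg z) hz).mul_left (qC q a)).mul_right ‖u‖)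
    calc ‖∑' m : ℕ, c (m + 1) * u ^ (m + 1)‖ ≤ ∑' m : ℕ, ‖c (m + 1) * u ^ (m + 1)‖ :=
          norm_tsum_le_tsum_norm hSn
      _ ≤ ∑' m : ℕ, qC q a * ‖z‖ ^ m * ‖u‖ := by
          apply Summable.tsum_le_tsum _ hSn hb
          intro m
          rw [norm_mul, norm_pow, pow_succ]
          have h1 : ‖c (m+1)‖ ≤ qC q a := coeff_norm_le hq a (m+1)
          have h2 : ‖u‖ ^ m ≤ ‖z‖ ^ m := pow_le_pow_left₀ (norm_nonneg u) hu m
          have h3 : (0:ℝ) ≤ ‖u‖ := norm_nonneg u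
          have h4 : (0:ℝ) ≤ ‖u‖ ^ m := pow_nonneg h3 m
          calc ‖c (m+1)‖ * (‖u‖ ^ m * ‖u‖) = ‖c (m+1)‖ * ‖u‖ ^ m * ‖u‖ := by ring
            _ ≤ qC q a * ‖z‖ ^ m * ‖u‖ :=
                mul_le_mul_of_nonneg_right (mul_le_mul h1 h2 h4 (qC_nonneg q a)) h3
      _ = qC q a * (1 - ‖z‖)⁻¹ * ‖u‖ := by
          rw [tsum_mul_right, tsum_mul_left, tsum_geometric_of_lt_one (norm_nonneg z) hz]
  have lim3 : Tendsto (fun n : ℕ => F (q ^ n * z)) atTop (nhds 1) := by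
    rw [tendsto_iff_norm_sub_tendsto_zero]
    apply squeeze_zero (fun n => norm_nonneg _)
      (g := fun n => qC q a * (1 - ‖z‖)⁻¹ * (‖z‖ * ‖q‖ ^ n))
    · intro n
      have : ‖q ^ n * z‖ ≤ ‖z‖ := by
        rw [norm_mul, norm_pow]
        have : ‖q‖ ^ n ≤ 1 := pow_le_one₀ (norm_nonneg q) hq.le
        nlinarith [norm_nonneg z]
      calc ‖F (q ^ n * z) - 1‖ ≤ qC q a * (1 - ‖z‖)⁻¹ * ‖q ^ n * z‖ := bound _ this
        _ = qC q a * (1 - ‖z‖)⁻¹ * (‖z‖ * ‖q‖ ^ n) := by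
            rw [norm_mul, norm_pow]; ring
    · have := (tendsto_pow_atTop_nhds_zero_of_lt_one (norm_nonneg q) hq).const_mul
        (qC q a * (1 - ‖z‖)⁻¹ * ‖z‖)
      simpa [mul_assoc] using this
  have ht1 : Tendsto (fun n : ℕ => qPoch q z n * F z) atTop (nhds (qPochInf q z * F z)) :=
    lim1.mul_const _
  have ht2 : Tendsto (fun n : ℕ => qPoch q (a * z) n * F (q ^ n * z)) atTop
      (nhds (qPochInf q (a * z) * 1)) := lim2.mul lim3
  have key : qPochInf q z * F z = qPochInf q (a * z) * 1 :=
    tendsto_nhds_unique (ht1.congr iter) ht2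
  have hz0 := qPochInf_ne_zero hq hzf
  show F z = qPochInf q (a * z) / qPochInf q z
  field_simp
  linear_combination key

end Lemmas


section Aux

variable {M N : ℕ} {q : ℂ} {x a : Fin M → ℂ} {w b : Fin N → ℂ}

/-- Reduce one term of the `F`-series to a sum over the `n`-vector. -/
lemma aux1 (hq' : ‖q‖ < 1) (hw' : ∀ j, ‖w j‖ < 1)
    (hzw : ∀ j (k : ℕ), 1 - q ^ k * w j ≠ 0)
    (hzbw : ∀ j (k : ℕ), 1 - q ^ k * (b j * w j) ≠ 0)
    (hbw : ∀ j n, qPoch q (b j * w j) n ≠ 0)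
    (m : Fin M → ℕ) :
    (∏ j, qPoch q (w j) (∑ i, m i) / qPoch q (b j * w j) (∑ i, m i)) *
      (∏ i, qPoch q (a i) (m i) / qPoch q q (m i)) * (∏ i, x i ^ m i)
    = (∏ j, qPochInf q (w j) / qPochInf q (b j * w j)) *
        ∑' nv : Fin N → ℕ,
          (∏ i, qPoch q (a i) (m i) / qPoch q q (m i) * x i ^ m i) *
            (∏ j, qPoch q (b j) (nv j) / qPoch q q (nv j) * w j ^ nv j) *
            q ^ ((∑ i, m i) * (∑ j, nv j)) := by
  have hsmall : ∀ (c : ℂ), ‖c‖ < 1 → ∀ s : ℕ, ‖c * q ^ s‖ < 1 := by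
    intro c hc s
    rw [norm_mul, norm_pow]
    have h1 : ‖q‖ ^ s ≤ 1 := pow_le_one₀ (norm_nonneg q) hq'.le
    have := mul_le_of_le_one_right (norm_nonneg c) h1
    linarith
  have hSg : ∀ j (s : ℕ), Summable fun n : ℕ =>
      ‖qPoch q (b j) n / qPoch q q n * w j ^ n * (q ^ s) ^ n‖ := by
    intro j s
    refine (summable_coeff hq' (b j) (hsmall _ (hw' j) s)).congr fun n => ?_
    congr 1
    ring
  have step1 : ∀ j (s : ℕ), qPoch q (w j) s / qPoch q (b j * w j) s
      = qPochInf q (w j) / qPochInf q (b j * w j) *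
        ∑' n : ℕ, qPoch q (b j) n / qPoch q q n * w j ^ n * (q ^ s) ^ n := by
    intro j s
    have hz1 : ‖w j * q ^ s‖ < 1 := hsmall _ (hw' j) s
    have hzf : ∀ k : ℕ, 1 - q ^ k * (w j * q ^ s) ≠ 0 :=
      fun k h0 => hzw j (k + s) (by rw [pow_add]; linear_combination h0)
    have haz : ∀ k : ℕ, 1 - q ^ k * (b j * (w j * q ^ s)) ≠ 0 :=
      fun k h0 => hzbw j (k + s) (by rw [pow_add]; linear_combination h0)
    have hbin := q_binomial (a := b j) hq' hz1 hzf haz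
    have hL : (∑' n : ℕ, qPoch q (b j) n / qPoch q q n * (w j * q ^ s) ^ n)
        = ∑' n : ℕ, qPoch q (b j) n / qPoch q q n * w j ^ n * (q ^ s) ^ n := by
      apply tsum_congr
      intro n
      ring
    have harg1 : b j * (w j * q ^ s) = q ^ s * (b j * w j) := by ring
    have harg2 : w j * q ^ s = q ^ s * w j := by ring
    rw [hL, harg1, harg2] at hbin
    have hsw := qPochInf_split hq' (hzw j) s
    have hsbw := qPochInf_split hq' (hzbw j) s
    have hA : qPochInf q (q ^ s * w j) ≠ 0 :=
      qPochInf_ne_zero hq' (fun k h0 => hzw j (k + s) (by rw [pow_add]; linear_combination h0))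
    have hB : qPochInf q (q ^ s * (b j * w j)) ≠ 0 :=
      qPochInf_ne_zero hq' (fun k h0 => hzbw j (k + s) (by rw [pow_add]; linear_combination h0))
    have hBW : qPochInf q (b j * w j) ≠ 0 := qPochInf_ne_zero hq' (hzbw j)
    have hPbw : qPoch q (b j * w j) s ≠ 0 := hbw j s
    have hA' : qPochInf q (w j * q ^ s) ≠ 0 := by rw [mul_comm]; exact hA
    have hC : qPochInf q (b j * w j * q ^ s) ≠ 0 := by
      rw [show b j * w j * q ^ s = q ^ s * (b j * w j) by ring]; exact hB
    rw [hbin, hsw, hsbw]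
    field_simp
  rw [Finset.prod_congr rfl (fun j _ => step1 j (∑ i, m i)), Finset.prod_mul_distrib]
  rw [(pi_tsum_prod N (fun j n => qPoch q (b j) n / qPoch q q n * w j ^ n *
    (q ^ (∑ i, m i)) ^ n) (fun j => hSg j (∑ i, m i))).2]
  rw [mul_assoc, mul_assoc, ← tsum_mul_right]
  congr 1
  apply tsum_congr
  intro nv
  have hsplitj : (∏ j, qPoch q (b j) (nv j) / qPoch q q (nv j) * w j ^ nv j *
      (q ^ (∑ i, m i)) ^ nv j)
      = (∏ j, qPoch q (b j) (nv j) / qPoch q q (nv j) * w j ^ nv j) *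
        q ^ ((∑ i, m i) * (∑ j, nv j)) := by
    rw [Finset.prod_mul_distrib, Finset.prod_pow_eq_pow_sum, ← pow_mul]
  have hmergei : (∏ i, qPoch q (a i) (m i) / qPoch q q (m i)) * (∏ i, x i ^ m i)
      = ∏ i, qPoch q (a i) (m i) / qPoch q q (m i) * x i ^ m i :=
    (Finset.prod_mul_distrib).symm
  rw [hsplitj, hmergei]
  ring

/-- Evaluate the inner sum over `m` for a fixed `nv`. -/
lemma aux2 (hq' : ‖q‖ < 1) (hx' : ∀ i, ‖x i‖ < 1)
    (hzax : ∀ i (k : ℕ), 1 - q ^ k * (a i * x i) ≠ 0)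
    (hzx : ∀ i (s k : ℕ), 1 - q ^ k * (x i * q ^ s) ≠ 0)
    (nv : Fin N → ℕ) :
    (∑' m : Fin M → ℕ,
      (∏ i, qPoch q (a i) (m i) / qPoch q q (m i) * x i ^ m i) *
        (∏ j, qPoch q (b j) (nv j) / qPoch q q (nv j) * w j ^ nv j) *
        q ^ ((∑ i, m i) * (∑ j, nv j)))
    = (∏ i, qPochInf q (a i * x i * q ^ (∑ j, nv j)) /
          qPochInf q (x i * q ^ (∑ j, nv j))) *
        ∏ j, qPoch q (b j) (nv j) / qPoch q q (nv j) * w j ^ nv j := by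
  have hsmall : ∀ (c : ℂ), ‖c‖ < 1 → ∀ s : ℕ, ‖c * q ^ s‖ < 1 := by
    intro c hc s
    rw [norm_mul, norm_pow]
    have h1 : ‖q‖ ^ s ≤ 1 := pow_le_one₀ (norm_nonneg q) hq'.le
    have := mul_le_of_le_one_right (norm_nonneg c) h1
    linarith
  have hSU : ∀ i (s : ℕ), Summable fun n : ℕ =>
      ‖qPoch q (a i) n / qPoch q q n * x i ^ n * (q ^ s) ^ n‖ := by
    intro i s
    refine (summable_coeff hq' (a i) (hsmall _ (hx' i) s)).congr fun n => ?_
    congr 1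
    ring
  have step3 : ∀ i (s : ℕ),
      (∑' m : ℕ, qPoch q (a i) m / qPoch q q m * x i ^ m * (q ^ s) ^ m)
      = qPochInf q (a i * x i * q ^ s) / qPochInf q (x i * q ^ s) := by
    intro i s
    have hz1 : ‖x i * q ^ s‖ < 1 := hsmall _ (hx' i) s
    have haz : ∀ k : ℕ, 1 - q ^ k * (a i * (x i * q ^ s)) ≠ 0 :=
      fun k h0 => hzax i (k + s) (by rw [pow_add]; linear_combination h0)
    have hbin := q_binomial (a := a i) hq' hz1 (hzx i s) haz
    have hL : (∑' m : ℕ, qPoch q (a i) m / qPoch q q m * (x i * q ^ s) ^ m)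
        = ∑' m : ℕ, qPoch q (a i) m / qPoch q q m * x i ^ m * (q ^ s) ^ m := by
      apply tsum_congr
      intro n
      ring
    rw [hL, show a i * (x i * q ^ s) = a i * x i * q ^ s from by ring] at hbin
    exact hbin
  have ptw : ∀ m : Fin M → ℕ,
      (∏ i, qPoch q (a i) (m i) / qPoch q q (m i) * x i ^ m i) *
        (∏ j, qPoch q (b j) (nv j) / qPoch q q (nv j) * w j ^ nv j) *
        q ^ ((∑ i, m i) * (∑ j, nv j))
      = (∏ i, qPoch q (a i) (m i) / qPoch q q (m i) * x i ^ m i *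
          (q ^ (∑ j, nv j)) ^ m i) *
          ∏ j, qPoch q (b j) (nv j) / qPoch q q (nv j) * w j ^ nv j := by
    intro m
    rw [Finset.prod_mul_distrib (f := fun i => qPoch q (a i) (m i) / qPoch q q (m i) * x i ^ m i),
      Finset.prod_pow_eq_pow_sum, ← pow_mul]
    ring
  rw [tsum_congr ptw, tsum_mul_right,
    ← (pi_tsum_prod M (fun i n => qPoch q (a i) n / qPoch q q n * x i ^ n *
      (q ^ (∑ j, nv j)) ^ n) (fun i => hSU i (∑ j, nv j))).2,
    Finset.prod_congr rfl (fun i _ => step3 i (∑ j, nv j))]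

end Aux

theorem statement3 (M N : ℕ) (q : ℂ) (x a : Fin M → ℂ) (w b : Fin N → ℂ)
    (hq : ‖q‖ < 1)
    (hx : ∀ i, ‖x i‖ < 1) (hw : ∀ j, ‖w j‖ < 1)
    (hbw : ∀ j n, qPoch q (b j * w j) n ≠ 0)
    (hax : ∀ i n, qPoch q (a i * x i) n ≠ 0)
    (hxinf : ∀ i, ∀ k : ℕ, qPochInf q (x i * q ^ k) ≠ 0)
    (hbinf : ∀ j, ∀ k : ℕ, qPochInf q (b j * q ^ k) ≠ 0)
    (hwinf : ∀ j, qPochInf q (w j) ≠ 0)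
    (hsum : Summable (fun p : (Fin M → ℕ) × (Fin N → ℕ) =>
      ‖(∏ i, qPoch q (a i) (p.1 i) / qPoch q q (p.1 i) * x i ^ p.1 i) *
        (∏ j, qPoch q (b j) (p.2 j) / qPoch q q (p.2 j) * w j ^ p.2 j) *
        q ^ ((∑ i, p.1 i) * (∑ j, p.2 j))‖)) :
    qHyperF q w a (fun j => b j * w j) x
      = (∏ j, qPochInf q (w j) * qPochInf q (b j) /
            (qPochInf q (b j * w j) * qPochInf q q)) *
        ∑' n : Fin N → ℕ,
          (∏ i, qPochInf q (a i * x i * q ^ (∑ j, n j)) /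
              qPochInf q (x i * q ^ (∑ j, n j))) *
            (∏ j, qPochInf q (q ^ (n j + 1)) / qPochInf q (b j * q ^ (n j))) *
            ∏ j, w j ^ n j := by
  have hq' : ‖q‖ < 1 := hq
  have hx' : ∀ i, ‖x i‖ < 1 := hx
  have hw' : ∀ j, ‖w j‖ < 1 := hw
  have hzw : ∀ j (k : ℕ), 1 - q ^ k * w j ≠ 0 := fun j => factor_ne_zero (hwinf j)
  have hzbw : ∀ j (k : ℕ), 1 - q ^ k * (b j * w j) ≠ 0 :=
    fun j => factor_ne_zero_of_qPoch (hbw j)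
  have hzax : ∀ i (k : ℕ), 1 - q ^ k * (a i * x i) ≠ 0 :=
    fun i => factor_ne_zero_of_qPoch (hax i)
  have hzx : ∀ i (s k : ℕ), 1 - q ^ k * (x i * q ^ s) ≠ 0 :=
    fun i s => factor_ne_zero (hxinf i s)
  have hzb0 : ∀ j (k : ℕ), 1 - q ^ k * b j ≠ 0 := by
    intro j k
    have := factor_ne_zero (hbinf j 0) k
    simpa using this
  have hzqn : ∀ (n k : ℕ), 1 - q ^ k * q ^ (n + 1) ≠ 0 :=
    fun n k h0 => qfactor_ne_zero hq' (k + n) (by linear_combination h0)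
  -- step 2 : expansion of the `b`-coefficients
  have step2 : ∀ j (n : ℕ), qPoch q (b j) n / qPoch q q n * w j ^ n
      = qPochInf q (b j) / qPochInf q q *
        (qPochInf q (q ^ (n + 1)) / qPochInf q (b j * q ^ n) * w j ^ n) := by
    intro j n
    have hsb := qPochInf_split hq' (hzb0 j) n
    have hsq := qPochInf_split hq' (qfactor_ne_zero hq') n
    rw [mul_comm (q ^ n) (b j)] at hsb
    rw [show q ^ n * q = q ^ (n + 1) from by rw [pow_succ]] at hsq
    have h1 : qPoch q q n ≠ 0 := qPoch_q_ne_zero hq' n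
    have h2 : qPochInf q (b j * q ^ n) ≠ 0 := hbinf j n
    have h3 : qPochInf q (q ^ (n + 1)) ≠ 0 := qPochInf_ne_zero hq' (hzqn n)
    have h4 : qPochInf q q ≠ 0 := qPochInf_ne_zero hq' (qfactor_ne_zero hq')
    rw [hsb, hsq]
    field_simp
  -- summability of the double family
  have hΦ : Summable (fun p : (Fin M → ℕ) × (Fin N → ℕ) =>
      (∏ i, qPoch q (a i) (p.1 i) / qPoch q q (p.1 i) * x i ^ p.1 i) *
        (∏ j, qPoch q (b j) (p.2 j) / qPoch q q (p.2 j) * w j ^ p.2 j) *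
        q ^ ((∑ i, p.1 i) * (∑ j, p.2 j))) := by
    apply Summable.of_norm
    exact hsum
  have hfib1 : ∀ m : Fin M → ℕ, Summable (fun nv : Fin N → ℕ =>
      (∏ i, qPoch q (a i) (m i) / qPoch q q (m i) * x i ^ m i) *
        (∏ j, qPoch q (b j) (nv j) / qPoch q q (nv j) * w j ^ nv j) *
        q ^ ((∑ i, m i) * (∑ j, nv j))) := fun m => hΦ.prod_factor m
  have hfib2 : ∀ nv : Fin N → ℕ, Summable (fun m : Fin M → ℕ =>
      (∏ i, qPoch q (a i) (m i) / qPoch q q (m i) * x i ^ m i) *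
        (∏ j, qPoch q (b j) (nv j) / qPoch q q (nv j) * w j ^ nv j) *
        q ^ ((∑ i, m i) * (∑ j, nv j))) := fun nv => hΦ.prod_symm.prod_factor nv
  have hcomm := Summable.tsum_comm' (f := fun (m : Fin M → ℕ) (nv : Fin N → ℕ) =>
      (∏ i, qPoch q (a i) (m i) / qPoch q q (m i) * x i ^ m i) *
        (∏ j, qPoch q (b j) (nv j) / qPoch q q (nv j) * w j ^ nv j) *
        q ^ ((∑ i, m i) * (∑ j, nv j))) hΦ hfib1 hfib2
  calc qHyperF q w a (fun j => b j * w j) x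
      = ∑' m : Fin M → ℕ,
          (∏ j, qPoch q (w j) (∑ i, m i) / qPoch q (b j * w j) (∑ i, m i)) *
            (∏ i, qPoch q (a i) (m i) / qPoch q q (m i)) * ∏ i, x i ^ m i := rfl
    _ = ∑' m : Fin M → ℕ,
          (∏ j, qPochInf q (w j) / qPochInf q (b j * w j)) *
            ∑' nv : Fin N → ℕ,
              (∏ i, qPoch q (a i) (m i) / qPoch q q (m i) * x i ^ m i) *
                (∏ j, qPoch q (b j) (nv j) / qPoch q q (nv j) * w j ^ nv j) *
                q ^ ((∑ i, m i) * (∑ j, nv j)) :=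
        tsum_congr fun m => aux1 hq' hw' hzw hzbw hbw m
    _ = (∏ j, qPochInf q (w j) / qPochInf q (b j * w j)) *
          ∑' m : Fin M → ℕ, ∑' nv : Fin N → ℕ,
            (∏ i, qPoch q (a i) (m i) / qPoch q q (m i) * x i ^ m i) *
              (∏ j, qPoch q (b j) (nv j) / qPoch q q (nv j) * w j ^ nv j) *
              q ^ ((∑ i, m i) * (∑ j, nv j)) := tsum_mul_left
    _ = (∏ j, qPochInf q (w j) / qPochInf q (b j * w j)) *
          ∑' nv : Fin N → ℕ, ∑' m : Fin M → ℕ,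
            (∏ i, qPoch q (a i) (m i) / qPoch q q (m i) * x i ^ m i) *
              (∏ j, qPoch q (b j) (nv j) / qPoch q q (nv j) * w j ^ nv j) *
              q ^ ((∑ i, m i) * (∑ j, nv j)) := by rw [← hcomm]
    _ = (∏ j, qPochInf q (w j) / qPochInf q (b j * w j)) *
          ∑' nv : Fin N → ℕ,
            (∏ i, qPochInf q (a i * x i * q ^ (∑ j, nv j)) /
                qPochInf q (x i * q ^ (∑ j, nv j))) *
              ∏ j, qPoch q (b j) (nv j) / qPoch q q (nv j) * w j ^ nv j := by
        congr 1
        exact tsum_congr fun nv => aux2 hq' hx' hzax hzx nv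
    _ = (∏ j, qPochInf q (w j) / qPochInf q (b j * w j)) *
          ∑' nv : Fin N → ℕ,
            (∏ j, qPochInf q (b j) / qPochInf q q) *
              ((∏ i, qPochInf q (a i * x i * q ^ (∑ j, nv j)) /
                  qPochInf q (x i * q ^ (∑ j, nv j))) *
                (∏ j, qPochInf q (q ^ (nv j + 1)) / qPochInf q (b j * q ^ (nv j))) *
                ∏ j, w j ^ nv j) := by
        congr 1
        apply tsum_congr
        intro nv
        rw [Finset.prod_congr rfl (fun j _ => step2 j (nv j)), Finset.prod_mul_distrib,
          Finset.prod_mul_distrib]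
        ring
    _ = (∏ j, qPochInf q (w j) * qPochInf q (b j) /
            (qPochInf q (b j * w j) * qPochInf q q)) *
        ∑' nv : Fin N → ℕ,
          (∏ i, qPochInf q (a i * x i * q ^ (∑ j, nv j)) /
              qPochInf q (x i * q ^ (∑ j, nv j))) *
            (∏ j, qPochInf q (q ^ (nv j + 1)) / qPochInf q (b j * q ^ (nv j))) *
            ∏ j, w j ^ nv j := by
        rw [tsum_mul_left, ← mul_assoc, ← Finset.prod_mul_distrib]
        congr 1
        apply Finset.prod_congr rfl
        intro j _
        rw [div_mul_div_comm]
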